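/- With the setup of translationally invariant modes on (ℂ²)^{⊗n}: the squared norm of (A*_1(n))² Ω_n equals 2(n-1)/n; hence the normalized two-excitation Fock vector |n_1 = 2; n⟩ := (1/√2)(A*_1(n))² Ω_n satisfies ⟨|n_1=2;n⟩, |n_1=2;n⟩⟩ = (n-1)/n → 1 as n → ∞. -/

import Mathlib

/-- The vacuum `Ω_n = |0⟩^{⊗n}` of the spin chain, in the occupation-set representation
where a basis configuration is the (finite) set of sites carrying a `1`. -/
noncomputable def vac : Finset ℕ → ℂ := fun S => if S = ∅ then 1 else 0

/-- The raising operator `σ⁺ = |1⟩⟨0|` acting at site `i` of the chain. -/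
noncomputable def sigmaPlus (i : ℕ) (ψ : Finset ℕ → ℂ) : Finset ℕ → ℂ :=
  fun S => if i ∈ S then ψ (S.erase i) else 0

/-- The translationally invariant creation operator
`A*_1(n) = n^{-1/2} ∑_{i=1}^n σ⁺_i` for the single-excitation pattern `α = (1)`. -/
noncomputable def Astar1 (n : ℕ) (ψ : Finset ℕ → ℂ) : Finset ℕ → ℂ :=
  fun S => ((Real.sqrt n)⁻¹ : ℂ) * ∑ i ∈ Finset.range n, sigmaPlus i ψ S

lemma astar_vac (n : ℕ) (T : Finset ℕ) :
    Astar1 n vac T =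
      if T ⊆ Finset.range n ∧ T.card = 1 then ((Real.sqrt n)⁻¹ : ℂ) else 0 := by
  unfold Astar1 sigmaPlus vac
  split_ifs with h
  · obtain ⟨hsub, hcard⟩ := h
    obtain ⟨j, hj⟩ := Finset.card_eq_one.mp hcard
    subst hj
    have hjn : j ∈ Finset.range n := hsub (Finset.mem_singleton_self j)
    have : ∀ i ∈ Finset.range n,
        (if i ∈ ({j} : Finset ℕ) then (if ({j} : Finset ℕ).erase i = ∅ then (1:ℂ) else 0) else 0)
          = if i = j then (1:ℂ) else 0 := by
      intro i _
      by_cases hij : i = j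
      · subst hij; simp
      · simp [hij, Finset.mem_singleton]
    rw [Finset.sum_congr rfl this, Finset.sum_ite_eq' (Finset.range n) j (fun _ => (1:ℂ))]
    simp [hjn]
  · have : ∀ i ∈ Finset.range n,
        (if i ∈ T then (if T.erase i = ∅ then (1:ℂ) else 0) else 0) = 0 := by
      intro i hi
      by_cases hiT : i ∈ T
      · have : T.erase i ≠ ∅ := by
          intro he
          apply h
          have hTj : T = {i} := by
            apply Finset.eq_singleton_iff_unique_mem.mpr
            refine ⟨hiT, fun x hx => ?_⟩
            by_contra hxne
            exact absurd (Finset.mem_erase.mpr ⟨hxne, hx⟩) (by simp [he])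
          subst hTj
          exact ⟨Finset.singleton_subset_iff.mpr hi, rfl⟩
        simp [hiT, this]
      · simp [hiT]
    rw [Finset.sum_congr rfl this]
    simp

lemma astar2_vac (n : ℕ) (hn : 1 ≤ n) (S : Finset ℕ) :
    Astar1 n (Astar1 n vac) S =
      if S ⊆ Finset.range n ∧ S.card = 2 then ((2 / n : ℝ) : ℂ) else 0 := by
  have hn0 : (n : ℝ) ≠ 0 := by positivity
  conv_lhs => rw [Astar1]
  simp only [sigmaPlus, astar_vac]
  split_ifs with h
  · obtain ⟨hsub, hcard⟩ := h
    have : ∀ i ∈ Finset.range n,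
        (if i ∈ S then
          (if S.erase i ⊆ Finset.range n ∧ (S.erase i).card = 1 then ((Real.sqrt n)⁻¹ : ℂ) else 0)
          else 0) = if i ∈ S then ((Real.sqrt n)⁻¹ : ℂ) else 0 := by
      intro i _
      by_cases hiS : i ∈ S
      · have h1 : S.erase i ⊆ Finset.range n := (Finset.erase_subset i S).trans hsub
        have h2' : (S.erase i).card = 1 := by
          rw [Finset.card_erase_of_mem hiS, hcard]
        simp [hiS, h1, h2']
      · simp [hiS]
    rw [Finset.sum_congr rfl this, Finset.sum_ite_mem,
      Finset.inter_eq_right.mpr hsub, Finset.sum_const, hcard]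
    have hs : (Real.sqrt n)⁻¹ * (Real.sqrt n)⁻¹ = (n : ℝ)⁻¹ := by
      rw [← mul_inv, Real.mul_self_sqrt (by positivity)]
    have hr : (Real.sqrt n)⁻¹ * (2 * (Real.sqrt n)⁻¹) = 2 / (n : ℝ) := by
      rw [show (Real.sqrt n)⁻¹ * (2 * (Real.sqrt n)⁻¹)
          = 2 * ((Real.sqrt n)⁻¹ * (Real.sqrt n)⁻¹) by ring, hs]
      ring
    rw [nsmul_eq_mul, ← hr]
    push_cast
    ring
  · have : ∀ i ∈ Finset.range n,
        (if i ∈ S then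
          (if S.erase i ⊆ Finset.range n ∧ (S.erase i).card = 1 then ((Real.sqrt n)⁻¹ : ℂ) else 0)
          else 0) = 0 := by
      intro i hi
      by_cases hiS : i ∈ S
      · have : ¬ (S.erase i ⊆ Finset.range n ∧ (S.erase i).card = 1) := by
          rintro ⟨h1, h2⟩
          apply h
          constructor
          · intro x hx
            by_cases hxi : x = i
            · subst hxi; exact hi
            · exact h1 (Finset.mem_erase.mpr ⟨hxi, hx⟩)
          · have := Finset.card_erase_of_mem hiS
            omega
        rw [if_pos hiS, if_neg this]
      · simp [hiS]
    rw [Finset.sum_congr rfl this]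
    simp

/-- The squared norm of `(A*_1(n))² Ω_n` equals `2(n-1)/n`, so the
normalized two-excitation Fock vector `|n₁=2;n⟩ = (1/√2)(A*_1(n))² Ω_n` has squared norm
`(n-1)/n`, which tends to `1` as `n → ∞`. -/
theorem stmt10 :
    (∀ n : ℕ, 1 ≤ n →
      ∑' S : Finset ℕ,
          (starRingEnd ℂ) (Astar1 n (Astar1 n vac) S) * Astar1 n (Astar1 n vac) S
        = ((2 * ((n : ℝ) - 1) / n : ℝ) : ℂ)) ∧
    (∀ n : ℕ, 1 ≤ n →
      ∑' S : Finset ℕ,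
          (starRingEnd ℂ) (((Real.sqrt 2)⁻¹ : ℂ) * Astar1 n (Astar1 n vac) S) *
            (((Real.sqrt 2)⁻¹ : ℂ) * Astar1 n (Astar1 n vac) S)
        = ((((n : ℝ) - 1) / n : ℝ) : ℂ)) ∧
    Filter.Tendsto (fun n : ℕ => ((n : ℝ) - 1) / n) Filter.atTop (nhds 1) := by
  have main : ∀ n : ℕ, 1 ≤ n →
      ∑' S : Finset ℕ,
          (starRingEnd ℂ) (Astar1 n (Astar1 n vac) S) * Astar1 n (Astar1 n vac) S
        = ((2 * ((n : ℝ) - 1) / n : ℝ) : ℂ) := by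
    intro n hn
    have hn0 : (n : ℝ) ≠ 0 := by positivity
    have hsum : ∑' S : Finset ℕ,
        (starRingEnd ℂ) (Astar1 n (Astar1 n vac) S) * Astar1 n (Astar1 n vac) S
        = ∑ S ∈ (Finset.range n).powersetCard 2,
            (starRingEnd ℂ) (Astar1 n (Astar1 n vac) S) * Astar1 n (Astar1 n vac) S := by
      apply tsum_eq_sum
      intro S hS
      rw [astar2_vac n hn]
      rw [if_neg (by
        intro hc
        exact hS (Finset.mem_powersetCard.mpr ⟨hc.1, hc.2⟩))]
      simp
    rw [hsum]
    have : ∀ S ∈ (Finset.range n).powersetCard 2,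
        (starRingEnd ℂ) (Astar1 n (Astar1 n vac) S) * Astar1 n (Astar1 n vac) S
          = (((2 / n) * (2 / n) : ℝ) : ℂ) := by
      intro S hS
      obtain ⟨h1, h2⟩ := Finset.mem_powersetCard.mp hS
      rw [astar2_vac n hn, if_pos ⟨h1, h2⟩, Complex.conj_ofReal]
      push_cast; ring
    rw [Finset.sum_congr rfl this, Finset.sum_const, Finset.card_powersetCard,
      Finset.card_range, nsmul_eq_mul]
    rw [show ((n.choose 2 : ℂ)) = ((n.choose 2 : ℝ) : ℂ) by push_cast; ring,
      ← Complex.ofReal_mul]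
    congr 1
    rw [Nat.cast_choose_two]
    field_simp
  refine ⟨main, ?_, ?_⟩
  · intro n hn
    have hn0 : (n : ℝ) ≠ 0 := by positivity
    have h2r : (Real.sqrt 2)⁻¹ * (Real.sqrt 2)⁻¹ = (2⁻¹ : ℝ) := by
      rw [← mul_inv, Real.mul_self_sqrt (by norm_num)]
    have h2 : (((Real.sqrt 2)⁻¹ : ℂ)) * ((Real.sqrt 2)⁻¹ : ℂ) = ((2⁻¹ : ℝ) : ℂ) := by
      exact_mod_cast congrArg (Complex.ofReal) h2r
    calc ∑' S : Finset ℕ,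
          (starRingEnd ℂ) (((Real.sqrt 2)⁻¹ : ℂ) * Astar1 n (Astar1 n vac) S) *
            (((Real.sqrt 2)⁻¹ : ℂ) * Astar1 n (Astar1 n vac) S)
        = ∑' S : Finset ℕ, ((2⁻¹ : ℝ) : ℂ) *
            ((starRingEnd ℂ) (Astar1 n (Astar1 n vac) S) * Astar1 n (Astar1 n vac) S) := by
          apply tsum_congr
          intro S
          rw [map_mul, map_inv₀, Complex.conj_ofReal]
          rw [← h2]; ring
      _ = ((2⁻¹ : ℝ) : ℂ) * ∑' S : Finset ℕ,
            (starRingEnd ℂ) (Astar1 n (Astar1 n vac) S) * Astar1 n (Astar1 n vac) S :=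
          tsum_mul_left
      _ = ((((n : ℝ) - 1) / n : ℝ) : ℂ) := by
          rw [main n hn, ← Complex.ofReal_mul]
          congr 1
          field_simp
  · have h1 : Filter.Tendsto (fun n : ℕ => 1 - 1 / (n : ℝ)) Filter.atTop (nhds 1) := by
      have := tendsto_one_div_atTop_nhds_zero_nat (𝕜 := ℝ)
      have := Filter.Tendsto.const_sub (1 : ℝ) this
      simpa using this
    apply h1.congr'
    filter_upwards [Filter.eventually_ge_atTop 1] with n hn
    have hn0 : (n : ℝ) ≠ 0 := by positivity
    field_simp
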